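/- Let X be a finite-dimensional real normed vector space ordered by a closed cone X₊ with non-empty topological interior, and let A : X → X be linear. Let L(X)₊ := {M ∈ L(X) : M X₊ ⊆ X₊} and define B : L(X) → L(X) by B(M) := AM, so that e^{tB}(M) = e^{tA} M for all t ≥ 0 and M ∈ L(X). If the semigroup (e^{tA})_{t≥0} is individually eventually nonnegative with respect to X₊ but not uniformly eventually nonnegative, then the semigroup (e^{tB})_{t≥0} on L(X) is weakly eventually nonnegative with respect to the cone L(X)₊, but not individually eventually nonnegative with respect to L(X)₊. -/

import Mathlib

open ContinuousLinearMap Set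

section Helpers

variable {X : Type*} [NormedAddCommGroup X] [NormedSpace ℝ X] [CompleteSpace X]

/-- Left multiplication on `X →L[ℝ] X`, as a ring homomorphism. -/
private noncomputable def lmulRing (X : Type*) [NormedAddCommGroup X] [NormedSpace ℝ X] :
    (X →L[ℝ] X) →+* ((X →L[ℝ] X) →L[ℝ] (X →L[ℝ] X)) where
  toFun := ContinuousLinearMap.compL ℝ X X X
  map_one' := by ext M x; simp
  map_mul' := fun A B => by ext M x; simp
  map_zero' := by ext M x; simp
  map_add' := fun A B => by ext M x; simp

/-- The exponential of left multiplication by `A` is left multiplication by the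
exponential of `A`. -/
private lemma exp_compL (A : X →L[ℝ] X) (t : ℝ) (M : X →L[ℝ] X) :
    NormedSpace.exp (t • ContinuousLinearMap.compL ℝ X X X A) M
      = (NormedSpace.exp (t • A)).comp M := by
  have h1 : t • ContinuousLinearMap.compL ℝ X X X A = lmulRing X (t • A) := by
    show _ = ContinuousLinearMap.compL ℝ X X X (t • A)
    rw [map_smul]
  letI : NormedAlgebra ℚ (X →L[ℝ] X) := .restrictScalars ℚ ℝ _
  letI : NormedAlgebra ℚ ((X →L[ℝ] X) →L[ℝ] (X →L[ℝ] X)) := .restrictScalars ℚ ℝ _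
  rw [h1, ← NormedSpace.map_exp (lmulRing X) (ContinuousLinearMap.compL ℝ X X X).continuous]
  rfl

private lemma sum_dite_fin {M : Type*} [AddCommMonoid M] {m n : ℕ} (hmn : m ≤ n) (f : Fin m → M) :
    (∑ j : Fin n, if h : (j : ℕ) < m then f ⟨j, h⟩ else 0) = ∑ i : Fin m, f i := by
  classical
  let g : ℕ → M := fun k => if h : k < m then f ⟨k, h⟩ else 0
  have h1 : (∑ j : Fin n, if h : (j : ℕ) < m then f ⟨j, h⟩ else 0) = ∑ j : Fin n, g j := rfl
  have h2 : (∑ i : Fin m, f i) = ∑ i : Fin m, g i := by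
    refine Finset.sum_congr rfl fun i _ => ?_
    simp only [g, dif_pos i.isLt, Fin.eta]
  rw [h1, h2, Fin.sum_univ_eq_sum_range g n, Fin.sum_univ_eq_sum_range g m]
  exact (Finset.sum_subset (Finset.range_subset_range.2 hmn)
    (fun k _ hk => dif_neg (by simpa using hk))).symm

/-- In a finite-dimensional normed space the convex hull of a compact set is compact. -/
private lemma isCompact_convexHull_fd {E : Type*} [NormedAddCommGroup E] [NormedSpace ℝ E]
    [FiniteDimensional ℝ E] {s : Set E} (hs : IsCompact s) :
    IsCompact (convexHull ℝ s) := by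
  rcases s.eq_empty_or_nonempty with rfl | ⟨s₀, hs₀⟩
  · simp
  classical
  set n := Module.finrank ℝ E + 1 with hn
  have hT : IsCompact ((stdSimplex ℝ (Fin n)) ×ˢ (Set.univ.pi fun _ : Fin n => s)) :=
    (isCompact_stdSimplex _ _).prod (isCompact_univ_pi fun _ => hs)
  have hg : Continuous (fun p : (Fin n → ℝ) × (Fin n → E) => ∑ i, p.1 i • p.2 i) := by
    refine continuous_finset_sum _ fun i _ => Continuous.smul ?_ ?_
    · exact (continuous_apply i).comp continuous_fst
    · exact (continuous_apply i).comp continuous_snd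
  have himg := hT.image hg
  have heq : convexHull ℝ s
      = (fun p : (Fin n → ℝ) × (Fin n → E) => ∑ i, p.1 i • p.2 i) ''
        ((stdSimplex ℝ (Fin n)) ×ˢ (Set.univ.pi fun _ : Fin n => s)) := by
    apply Subset.antisymm
    · intro x hx
      obtain ⟨ι, _inst, z, w, hzs, hai, hw0, hw1, hxx⟩ :=
        eq_pos_convex_span_of_mem_convexHull hx
      have hcard : Fintype.card ι ≤ n := by
        refine hai.card_le_finrank_succ.trans ?_
        exact Nat.succ_le_succ (Submodule.finrank_le _)
      set m := Fintype.card ι with hm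
      let e := Fintype.equivFin ι
      let W : Fin n → ℝ := fun j => if h : (j : ℕ) < m then w (e.symm ⟨j, h⟩) else 0
      let Z : Fin n → E := fun j => if h : (j : ℕ) < m then z (e.symm ⟨j, h⟩) else s₀
      refine ⟨(W, Z), ⟨⟨fun j => ?_, ?_⟩, fun j _ => ?_⟩, ?_⟩
      · by_cases h : (j : ℕ) < m
        · simp only [W, dif_pos h]; exact (hw0 _).le
        · simp only [W, dif_neg h]; exact le_refl 0
      · show (∑ j, W j) = 1
        have hsd := sum_dite_fin hcard (fun i : Fin m => w (e.symm i))
        rw [show (∑ j, W j) = ∑ j : Fin n, if h : (j : ℕ) < m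
            then w (e.symm ⟨j, h⟩) else 0 from rfl, hsd, Equiv.sum_comp e.symm w, ← hw1]
      · by_cases h : (j : ℕ) < m
        · simp only [Z, dif_pos h]; exact hzs (Set.mem_range_self _)
        · simp only [Z, dif_neg h]; exact hs₀
      · show (∑ j, W j • Z j) = x
        have h1 : ∀ j : Fin n, W j • Z j
            = (if h : (j : ℕ) < m then w (e.symm ⟨j, h⟩) • z (e.symm ⟨j, h⟩) else 0) := by
          intro j
          by_cases h : (j : ℕ) < m
          · simp only [W, Z, dif_pos h]
          · simp only [W, Z, dif_neg h, zero_smul]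
        rw [Finset.sum_congr rfl fun j _ => h1 j,
          sum_dite_fin hcard (fun i : Fin m => w (e.symm i) • z (e.symm i)),
          Equiv.sum_comp e.symm (fun i => w i • z i), ← hxx]
    · rintro x' ⟨p, ⟨hp1, hp2⟩, rfl⟩
      exact (convex_convexHull ℝ s).sum_mem (fun i _ => hp1.1 i) hp1.2
        (fun i _ => subset_convexHull ℝ s (hp2 i (Set.mem_univ i)))
  rw [heq]; exact himg

/-- Finite-dimensional normed spaces are reflexive: every continuous functional on the dual
is evaluation at a point. -/
private lemma bidual_exists {E : Type*} [NormedAddCommGroup E] [NormedSpace ℝ E]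
    [FiniteDimensional ℝ E] (f : (E →L[ℝ] ℝ) →L[ℝ] ℝ) :
    ∃ z : E, ∀ ψ : E →L[ℝ] ℝ, f ψ = ψ z := by
  classical
  set b := Module.finBasis ℝ E with hb
  set coordL : Fin (Module.finrank ℝ E) → (E →L[ℝ] ℝ) := fun i =>
    LinearMap.toContinuousLinearMap (b.coord i) with hcoordL
  refine ⟨∑ i, f (coordL i) • b i, fun ψ => ?_⟩
  have hψ : ψ = ∑ i, ψ (b i) • coordL i := by
    ext x
    rw [ContinuousLinearMap.sum_apply]
    conv_lhs => rw [← b.sum_repr x]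
    rw [map_sum]
    refine Finset.sum_congr rfl fun i _ => ?_
    rw [map_smul, ContinuousLinearMap.smul_apply]
    simp only [coordL, smul_eq_mul, LinearMap.coe_toContinuousLinearMap', Module.Basis.coord_apply]
    ring
  calc f ψ = f (∑ i, ψ (b i) • coordL i) := by rw [← hψ]
    _ = ∑ i, ψ (b i) * f (coordL i) := by rw [map_sum]; simp
    _ = ψ (∑ i, f (coordL i) • b i) := by
        rw [map_sum]
        refine Finset.sum_congr rfl fun i _ => ?_
        rw [map_smul]; simp [mul_comm]

end Helpers

set_option maxHeartbeats 1600000 in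
/-- Let `X` be a finite-dimensional real normed space ordered by a closed
cone `C` with non-empty interior and let `A` be a linear operator on `X`. Consider the space
`L(X)` with the cone `L(X)₊ = {M | M C ⊆ C}` and the operator `B : M ↦ A ∘ M` of left
multiplication by `A`, whose semigroup satisfies `e^{tB}(M) = e^{tA} M`. If `(e^{tA})_{t ≥ 0}`
is individually but not uniformly eventually nonnegative w.r.t. `C`, then `(e^{tB})_{t ≥ 0}`
is weakly but not individually eventually nonnegative w.r.t. `L(X)₊`. -/
theorem leftMultiplication_weakly_not_individually_eventually_nonneg
    (X : Type*) [NormedAddCommGroup X] [NormedSpace ℝ X] [FiniteDimensional ℝ X]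
    (C : Set X) (hC_closed : IsClosed C)
    (hC_add : ∀ x ∈ C, ∀ y ∈ C, x + y ∈ C)
    (hC_smul : ∀ (l : ℝ), 0 ≤ l → ∀ x ∈ C, l • x ∈ C)
    (hC_pointed : C ∩ (-C) = {0})
    (hC_int : (interior C).Nonempty)
    (A : X →L[ℝ] X)
    (h_ind : ∀ x ∈ C, ∃ t₀ : ℝ, 0 ≤ t₀ ∧ ∀ t : ℝ, t₀ ≤ t → NormedSpace.exp (t • A) x ∈ C)
    (h_not_unif : ¬ ∃ t₀ : ℝ, 0 ≤ t₀ ∧ ∀ t : ℝ, t₀ ≤ t → ∀ x ∈ C,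
      NormedSpace.exp (t • A) x ∈ C) :
    (∀ M ∈ {M : X →L[ℝ] X | ∀ x ∈ C, M x ∈ C},
      ∀ φ ∈ {ψ : (X →L[ℝ] X) →L[ℝ] ℝ |
        ∀ T : X →L[ℝ] X, (∀ x ∈ C, T x ∈ C) → 0 ≤ ψ T},
      ∃ t₀ : ℝ, 0 ≤ t₀ ∧ ∀ t : ℝ, t₀ ≤ t →
        0 ≤ φ (NormedSpace.exp (t • ContinuousLinearMap.compL ℝ X X X A) M)) ∧
    ¬ (∀ M ∈ {M : X →L[ℝ] X | ∀ x ∈ C, M x ∈ C},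
      ∃ t₀ : ℝ, 0 ≤ t₀ ∧ ∀ t : ℝ, t₀ ≤ t →
        NormedSpace.exp (t • ContinuousLinearMap.compL ℝ X X X A) M ∈
          {M' : X →L[ℝ] X | ∀ x ∈ C, M' x ∈ C}) := by
  classical
  constructor
  · -- weak eventual nonnegativity
    intro M hM φ hφ
    rcases subsingleton_or_nontrivial X with hX | hX
    · refine ⟨0, le_refl 0, fun t _ => ?_⟩
      have h0 : NormedSpace.exp (t • ContinuousLinearMap.compL ℝ X X X A) M = 0 := by
        ext x; exact Subsingleton.elim _ _
      rw [h0, map_zero]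
    have hM' : ∀ x ∈ C, M x ∈ C := hM
    have hφ' : ∀ T : X →L[ℝ] X, (∀ x ∈ C, T x ∈ C) → 0 ≤ φ T := hφ
    have h0C : (0 : X) ∈ C := by
      have h : (0:X) ∈ C ∩ (-C) := by rw [hC_pointed]; exact Set.mem_singleton 0
      exact h.1
    have hCconv : Convex ℝ C := fun x hx y hy a b ha hb _ =>
      hC_add _ (hC_smul a ha x hx) _ (hC_smul b hb y hy)
    obtain ⟨e, he⟩ := hC_int
    have heC : e ∈ C := interior_subset he
    obtain ⟨ε, hε, hball⟩ := Metric.isOpen_iff.1 isOpen_interior e he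
    have hballC : Metric.ball e ε ⊆ C := hball.trans interior_subset
    have hepse : ∀ v : X, ‖v‖ ≤ ε/2 → e + v ∈ C := by
      intro v hv
      apply hballC
      rw [Metric.mem_ball, dist_eq_norm]
      have h2 : e + v - e = v := by abel
      rw [h2]
      linarith
    have he0 : e ≠ 0 := by
      intro h
      have hall : ∀ v : X, v ∈ C := by
        intro v
        rcases eq_or_ne v 0 with rfl | hv
        · exact h0C
        · have hvn : 0 < ‖v‖ := norm_pos_iff.2 hv
          have hn : ‖((ε/2) * ‖v‖⁻¹) • v‖ = ε/2 := by
            rw [norm_smul, Real.norm_eq_abs, abs_of_nonneg (by positivity)]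
            field_simp
          have h1 := hepse _ (le_of_eq hn)
          rw [h, zero_add] at h1
          have h2 := hC_smul ((2/ε) * ‖v‖) (by positivity) _ h1
          rw [smul_smul] at h2
          have h3 : (2/ε * ‖v‖) * ((ε/2) * ‖v‖⁻¹) = 1 := by field_simp
          rwa [h3, one_smul] at h2
      obtain ⟨v, hv⟩ := exists_ne (0 : X)
      have hmem : v ∈ C ∩ (-C) := ⟨hall v, by rw [Set.mem_neg]; exact hall (-v)⟩
      rw [hC_pointed] at hmem
      exact hv hmem
    set C' : Set (X →L[ℝ] ℝ) := {x' | ∀ c ∈ C, 0 ≤ x' c} with hC'def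
    have hbipolar : ∀ y : X, (∀ x' ∈ C', 0 ≤ x' y) → y ∈ C := by
      intro y hy
      by_contra hyC
      obtain ⟨f, u, hfC, hfy⟩ := geometric_hahn_banach_closed_point hCconv hC_closed hyC
      have hu0 : 0 < u := by have := hfC 0 h0C; rwa [map_zero] at this
      have hfnonpos : ∀ a ∈ C, f a ≤ 0 := by
        intro a ha
        by_contra hpos
        push_neg at hpos
        have h1 := hfC ((u / f a + 1) • a) (hC_smul _ (by positivity) a ha)
        rw [map_smul, smul_eq_mul] at h1
        have h2 : (u / f a + 1) * f a = u + f a := by field_simp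
        rw [h2] at h1
        linarith
      have h3 := hy (-f) (fun c hc => by
        rw [ContinuousLinearMap.neg_apply]; linarith [hfnonpos c hc])
      rw [ContinuousLinearMap.neg_apply] at h3
      linarith
    have hS₁comp : IsCompact (C ∩ Metric.sphere (0:X) 1) :=
      (isCompact_sphere 0 1).inter_left hC_closed
    have hD₁comp : IsCompact (convexHull ℝ (C ∩ Metric.sphere (0:X) 1)) :=
      isCompact_convexHull_fd hS₁comp
    have h0D₁ : (0:X) ∉ convexHull ℝ (C ∩ Metric.sphere (0:X) 1) := by
      intro h0
      rw [convexHull_eq] at h0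
      obtain ⟨ι, t, w, z, hw0, hw1, hzS, hcm⟩ := h0
      rw [Finset.centerMass_eq_of_sum_1 _ _ hw1] at hcm
      have hex : ∃ i ∈ t, 0 < w i := by
        by_contra hno
        push_neg at hno
        have hzero : ∑ i ∈ t, w i = 0 :=
          Finset.sum_eq_zero fun i hi => le_antisymm (hno i hi) (hw0 i hi)
        rw [hw1] at hzero
        norm_num at hzero
      obtain ⟨i, hit, hwi⟩ := hex
      have hsum : w i • z i + ∑ j ∈ t.erase i, w j • z j = 0 :=
        (Finset.add_sum_erase t (fun j => w j • z j) hit).trans hcm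
      have hrest : ∑ j ∈ t.erase i, w j • z j ∈ C := by
        apply Finset.sum_induction _ (· ∈ C) (fun a b ha hb => hC_add a ha b hb) h0C
        intro j hj
        exact hC_smul _ (hw0 j (Finset.mem_of_mem_erase hj)) _
          (hzS j (Finset.mem_of_mem_erase hj)).1
      have h1 : w i • z i ∈ C := hC_smul _ hwi.le _ (hzS i hit).1
      have h2 : w i • z i ∈ C ∩ (-C) := ⟨h1, by
        rw [Set.mem_neg]
        have hng : -(w i • z i) = ∑ j ∈ t.erase i, w j • z j :=
          neg_eq_of_add_eq_zero_right hsum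
        rw [hng]; exact hrest⟩
      rw [hC_pointed, Set.mem_singleton_iff] at h2
      have hz0 : z i = 0 := by
        rcases smul_eq_zero.1 h2 with h | h
        · exact absurd h hwi.ne'
        · exact h
      have hsph := (hzS i hit).2
      rw [hz0, mem_sphere_zero_iff_norm, norm_zero] at hsph
      norm_num at hsph
    obtain ⟨x'₀, c₀, hx'₀0, hx'₀D⟩ :=
      geometric_hahn_banach_point_closed (convex_convexHull ℝ _) hD₁comp.isClosed h0D₁
    have hc₀ : 0 < c₀ := by rwa [map_zero] at hx'₀0
    have hx'₀unit : ∀ x ∈ C, ‖x‖ = 1 → c₀ ≤ x'₀ x := by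
      intro x hx hn
      exact (hx'₀D x (subset_convexHull ℝ _ ⟨hx, by rwa [mem_sphere_zero_iff_norm]⟩)).le
    have hx'₀pos : ∀ x ∈ C, 0 ≤ x'₀ x := by
      intro x hx
      rcases eq_or_ne x 0 with rfl | hx0
      · rw [map_zero]
      · have hxn : 0 < ‖x‖ := norm_pos_iff.2 hx0
        have hu : ‖x‖⁻¹ • x ∈ C := hC_smul _ (by positivity) x hx
        have hn : ‖(‖x‖⁻¹ • x)‖ = 1 := by
          rw [norm_smul, Real.norm_eq_abs, abs_of_nonneg (by positivity)]
          field_simp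
        have h1 := hx'₀unit _ hu hn
        have h2 : x'₀ x = ‖x‖ * x'₀ (‖x‖⁻¹ • x) := by
          rw [map_smul, smul_eq_mul, ← mul_assoc,
            mul_inv_cancel₀ (norm_ne_zero_iff.2 hx0), one_mul]
        rw [h2]
        exact mul_nonneg hxn.le (le_trans hc₀.le h1)
    have hx'₀e : 0 < x'₀ e := by
      have hen : 0 < ‖e‖ := norm_pos_iff.2 he0
      have hu : ‖e‖⁻¹ • e ∈ C := hC_smul _ (by positivity) e heC
      have hn : ‖(‖e‖⁻¹ • e)‖ = 1 := by
        rw [norm_smul, Real.norm_eq_abs, abs_of_nonneg (by positivity)]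
        field_simp
      have h1 := hx'₀unit _ hu hn
      have h2 : x'₀ e = ‖e‖ * x'₀ (‖e‖⁻¹ • e) := by
        rw [map_smul, smul_eq_mul, ← mul_assoc,
          mul_inv_cancel₀ (norm_ne_zero_iff.2 he0), one_mul]
      rw [h2]
      nlinarith
    have habs : ∀ x' ∈ C', ∀ v : X, ‖v‖ ≤ ε/2 → |x' v| ≤ x' e := by
      intro x' hx' v hv
      have h1 : 0 ≤ x' (e + v) := hx' _ (hepse v hv)
      have h2 : 0 ≤ x' (e - v) := hx' _ (by
        have h3 := hepse (-v) (by rwa [norm_neg])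
        rwa [← sub_eq_add_neg] at h3)
      rw [map_add] at h1
      rw [map_sub] at h2
      rw [abs_le]
      constructor <;> linarith
    have hnormC' : ∀ x' ∈ C', ‖x'‖ ≤ (2/ε) * x' e := by
      intro x' hx'
      have he' : 0 ≤ x' e := hx' e heC
      refine ContinuousLinearMap.opNorm_le_bound _ (by positivity) fun v => ?_
      rcases eq_or_ne v 0 with rfl | hv
      · simp
      · have hvn : 0 < ‖v‖ := norm_pos_iff.2 hv
        have hn : ‖((ε/2) * ‖v‖⁻¹) • v‖ = ε/2 := by
          rw [norm_smul, Real.norm_eq_abs, abs_of_nonneg (by positivity)]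
          field_simp
        have h1 := habs x' hx' _ (le_of_eq hn)
        rw [map_smul, smul_eq_mul, abs_mul,
          abs_of_nonneg (by positivity : (0:ℝ) ≤ (ε/2) * ‖v‖⁻¹)] at h1
        rw [Real.norm_eq_abs]
        have h4 : |x' v| = ((2/ε) * ‖v‖) * ((ε/2) * ‖v‖⁻¹ * |x' v|) := by
          field_simp
        rw [h4]
        calc ((2/ε) * ‖v‖) * ((ε/2) * ‖v‖⁻¹ * |x' v|) ≤ ((2/ε) * ‖v‖) * x' e :=
              mul_le_mul_of_nonneg_left h1 (by positivity)
          _ = 2/ε * x' e * ‖v‖ := by ring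
    have hC'closed : IsClosed C' := by
      have hrw : C' = ⋂ c ∈ C, {x' : X →L[ℝ] ℝ | 0 ≤ x' c} := by
        ext x'
        simp only [hC'def, Set.mem_setOf_eq, Set.mem_iInter]
      rw [hrw]
      exact isClosed_biInter fun c _ => isClosed_le continuous_const
        (ContinuousLinearMap.apply ℝ ℝ c).continuous
    set C'₁ : Set (X →L[ℝ] ℝ) := {x' | x' ∈ C' ∧ x' e = 1} with hC'₁def
    have hC'₁comp : IsCompact C'₁ := by
      have hclosed : IsClosed C'₁ := by
        have hrw : C'₁ = C' ∩ {x' : X →L[ℝ] ℝ | x' e = 1} := rfl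
        rw [hrw]
        exact hC'closed.inter (isClosed_eq (ContinuousLinearMap.apply ℝ ℝ e).continuous
          continuous_const)
      have hbdd : C'₁ ⊆ Metric.closedBall 0 (2/ε) := by
        intro x' hx'
        rw [Metric.mem_closedBall, dist_zero_right]
        have h1 := hnormC' x' hx'.1
        rwa [hx'.2, mul_one] at h1
      exact (isCompact_closedBall (0 : X →L[ℝ] ℝ) (2/ε)).of_isClosed_subset hclosed hbdd
    set β : X → (X →L[ℝ] ℝ) → ((X →L[ℝ] X) →L[ℝ] ℝ) :=
      fun x x' => x'.comp (ContinuousLinearMap.apply ℝ X x) with hβdef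
    have hβapp : ∀ x x' N, β x x' N = x' (N x) := fun x x' N => rfl
    have hβcont : Continuous fun p : X × (X →L[ℝ] ℝ) => β p.1 p.2 :=
      Continuous.clm_comp continuous_snd
        ((ContinuousLinearMap.apply ℝ X).continuous.comp continuous_fst)
    set S : Set ((X →L[ℝ] X) →L[ℝ] ℝ) :=
      (fun p : X × (X →L[ℝ] ℝ) => β p.1 p.2) '' ((C ∩ Metric.sphere 0 1) ×ˢ C'₁) with hSdef
    have hScomp : IsCompact S := (hS₁comp.prod hC'₁comp).image hβcont
    set D := convexHull ℝ S with hDdef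
    have hDcomp : IsCompact D :=
      isCompact_convexHull_fd (E := (X →L[ℝ] X) →L[ℝ] ℝ) hScomp
    have hDconv : Convex ℝ D := convex_convexHull ℝ S
    set M₀ : X →L[ℝ] X := x'₀.smulRight e with hM₀def
    have hM₀app : ∀ x, M₀ x = x'₀ x • e := fun x => rfl
    have hDlower : ∀ q ∈ D, c₀ ≤ q M₀ := by
      intro q hq
      have hsub : S ⊆ {ψ : (X →L[ℝ] X) →L[ℝ] ℝ | c₀ ≤ ψ M₀} := by
        rintro _ ⟨⟨x, x'⟩, ⟨⟨hxC, hxs⟩, hx'⟩, rfl⟩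
        show c₀ ≤ β x x' M₀
        rw [hβapp, hM₀app, map_smul, smul_eq_mul, hx'.2, mul_one]
        exact hx'₀unit x hxC (mem_sphere_zero_iff_norm.1 hxs)
      have hconv2 : Convex ℝ {ψ : (X →L[ℝ] X) →L[ℝ] ℝ | c₀ ≤ ψ M₀} :=
        convex_halfSpace_ge ⟨fun a b => ContinuousLinearMap.add_apply a b M₀,
          fun r a => ContinuousLinearMap.smul_apply a r M₀⟩ c₀
      exact convexHull_min hsub hconv2 hq
    have hSne : S.Nonempty := by
      refine ⟨β (‖e‖⁻¹ • e) ((x'₀ e)⁻¹ • x'₀),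
        ⟨(‖e‖⁻¹ • e, (x'₀ e)⁻¹ • x'₀), ⟨⟨?_, ?_⟩, ?_, ?_⟩, rfl⟩⟩
      · exact hC_smul _ (by positivity) e heC
      · rw [mem_sphere_zero_iff_norm, norm_smul, Real.norm_eq_abs,
          abs_of_nonneg (by positivity)]
        exact inv_mul_cancel₀ (norm_ne_zero_iff.2 he0)
      · intro c hc
        rw [ContinuousLinearMap.smul_apply, smul_eq_mul]
        exact mul_nonneg (by positivity) (hx'₀pos c hc)
      · rw [ContinuousLinearMap.smul_apply, smul_eq_mul, inv_mul_cancel₀ hx'₀e.ne']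
    obtain ⟨q₀, hq₀D⟩ : D.Nonempty := Set.Nonempty.mono (subset_convexHull ℝ S) hSne
    set K : Set ((X →L[ℝ] X) →L[ℝ] ℝ) := {ψ | ∃ r : ℝ, 0 ≤ r ∧ ∃ q ∈ D, ψ = r • q} with hKdef
    have h0K : (0 : (X →L[ℝ] X) →L[ℝ] ℝ) ∈ K := ⟨0, le_refl 0, q₀, hq₀D, (zero_smul ℝ q₀).symm⟩
    have hKsmul : ∀ (c : ℝ), 0 ≤ c → ∀ ψ ∈ K, c • ψ ∈ K := by
      rintro c hc ψ ⟨r, hr, q, hq, rfl⟩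
      exact ⟨c * r, mul_nonneg hc hr, q, hq, smul_smul c r q⟩
    have hKadd : ∀ ψ₁ ∈ K, ∀ ψ₂ ∈ K, ψ₁ + ψ₂ ∈ K := by
      rintro _ ⟨r₁, hr₁, q₁, hq₁, rfl⟩ _ ⟨r₂, hr₂, q₂, hq₂, rfl⟩
      rcases eq_or_lt_of_le (add_nonneg hr₁ hr₂) with h | h
      · have hr10 : r₁ = 0 := by linarith
        have hr20 : r₂ = 0 := by linarith
        rw [hr10, hr20, zero_smul, zero_smul, add_zero]
        exact h0K
      · refine ⟨r₁ + r₂, h.le, (r₁/(r₁+r₂)) • q₁ + (r₂/(r₁+r₂)) • q₂,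
          hDconv hq₁ hq₂ (div_nonneg hr₁ h.le) (div_nonneg hr₂ h.le)
            (by rw [← add_div, div_self h.ne']), ?_⟩
        have e1 : (r₁ + r₂) * (r₁ / (r₁ + r₂)) = r₁ := by
          rw [mul_comm, div_mul_cancel₀ _ h.ne']
        have e2 : (r₁ + r₂) * (r₂ / (r₁ + r₂)) = r₂ := by
          rw [mul_comm, div_mul_cancel₀ _ h.ne']
        rw [smul_add, smul_smul, smul_smul, e1, e2]
    have hKconv : Convex ℝ K := fun ψ₁ h1 ψ₂ h2 a b ha hb _ =>
      hKadd _ (hKsmul a ha ψ₁ h1) _ (hKsmul b hb ψ₂ h2)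
    have hKclosed : IsClosed K := by
      refine isClosed_of_closure_subset fun ψ hψ => ?_
      set B := (‖ψ‖ + 1) * ‖M₀‖ / c₀ with hB
      have himg : IsCompact ((fun p : ℝ × ((X →L[ℝ] X) →L[ℝ] ℝ) => p.1 • p.2) ''
          ((Set.Icc 0 B) ×ˢ D)) :=
        ((isCompact_Icc).prod hDcomp).image (continuous_fst.smul continuous_snd)
      have hsub : K ∩ Metric.ball ψ 1 ⊆ (fun p : ℝ × ((X →L[ℝ] X) →L[ℝ] ℝ) => p.1 • p.2) ''
          ((Set.Icc 0 B) ×ˢ D) := by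
        rintro χ ⟨⟨r, hr, q, hq, rfl⟩, hball⟩
        have h1 : c₀ * r ≤ (r • q) M₀ := by
          rw [ContinuousLinearMap.smul_apply, smul_eq_mul]
          have h5 := hDlower q hq
          nlinarith
        have hb1 : ‖r • q‖ ≤ ‖ψ‖ + 1 := by
          have h6 : ‖r • q - ψ‖ < 1 := by have h := Metric.mem_ball.1 hball; exact (dist_eq_norm (r • q) ψ).symm.trans_lt h
          have h7 : ‖r • q‖ ≤ ‖r • q - ψ‖ + ‖ψ‖ := by
            simpa using norm_add_le (r • q - ψ) ψ
          linarith
        have h2 : (r • q) M₀ ≤ (‖ψ‖ + 1) * ‖M₀‖ := by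
          calc (r • q) M₀ ≤ ‖(r • q) M₀‖ := le_abs_self _
            _ ≤ ‖r • q‖ * ‖M₀‖ := ContinuousLinearMap.le_opNorm _ _
            _ ≤ (‖ψ‖ + 1) * ‖M₀‖ := by nlinarith [norm_nonneg M₀]
        have hrB : r ≤ B := by
          rw [hB, le_div_iff₀ hc₀]
          nlinarith
        exact ⟨(r, q), ⟨⟨hr, hrB⟩, hq⟩, rfl⟩
      have hψ1 : ψ ∈ closure (K ∩ Metric.ball ψ 1) := by
        rw [mem_closure_iff_nhds] at hψ ⊢
        intro U hU
        obtain ⟨χ, hχ⟩ := hψ (U ∩ Metric.ball ψ 1)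
          (Filter.inter_mem hU (Metric.ball_mem_nhds ψ one_pos))
        exact ⟨χ, hχ.1.1, hχ.2, hχ.1.2⟩
      have hmem := (closure_mono hsub) hψ1
      rw [IsClosed.closure_eq himg.isClosed] at hmem
      obtain ⟨⟨r, q⟩, ⟨⟨hr0, _⟩, hq⟩, rfl⟩ := hmem
      exact ⟨r, hr0, q, hq, rfl⟩
    have hGK : ∀ x ∈ C, ∀ x' ∈ C', β x x' ∈ K := by
      intro x hx x' hx'
      rcases eq_or_ne x 0 with rfl | hx0
      · have hz : β 0 x' = 0 := by
          ext N
          show x' (N 0) = 0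
          rw [map_zero, map_zero]
        rw [hz]; exact h0K
      rcases eq_or_ne (x' e) 0 with he' | he'
      · have hx'0 : x' = (0 : X →L[ℝ] ℝ) := by
          have h1 := hnormC' x' hx'
          rw [he', mul_zero] at h1
          exact norm_le_zero_iff.1 h1
        have hz : β x x' = 0 := by
          rw [hx'0]
          ext N
          show (0 : X →L[ℝ] ℝ) (N x) = 0
          rfl
        rw [hz]; exact h0K
      · have hx'e : 0 < x' e := lt_of_le_of_ne (hx' e heC) (Ne.symm he')
        have hxn : 0 < ‖x‖ := norm_pos_iff.2 hx0
        refine ⟨‖x‖ * x' e, by positivity, β (‖x‖⁻¹ • x) ((x' e)⁻¹ • x'),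
          subset_convexHull ℝ S ⟨(‖x‖⁻¹ • x, (x' e)⁻¹ • x'), ⟨⟨?_, ?_⟩, ?_, ?_⟩, rfl⟩, ?_⟩
        · exact hC_smul _ (by positivity) x hx
        · rw [mem_sphere_zero_iff_norm, norm_smul, Real.norm_eq_abs,
            abs_of_nonneg (by positivity)]
          field_simp
        · intro c hc
          rw [ContinuousLinearMap.smul_apply, smul_eq_mul]
          exact mul_nonneg (by positivity) (hx' c hc)
        · rw [ContinuousLinearMap.smul_apply, smul_eq_mul, inv_mul_cancel₀ he']
        · ext N
          rw [ContinuousLinearMap.smul_apply, hβapp, hβapp, ContinuousLinearMap.smul_apply,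
            map_smul, map_smul, smul_eq_mul, smul_eq_mul, smul_eq_mul]
          field_simp
    have hφK : φ ∈ K := by
      by_contra hφK
      obtain ⟨f, u, hfK, hfφ⟩ := geometric_hahn_banach_closed_point hKconv hKclosed hφK
      have hu0 : 0 < u := by have := hfK 0 h0K; rwa [map_zero] at this
      have hfnonpos : ∀ ψ ∈ K, f ψ ≤ 0 := by
        intro ψ hψ
        by_contra hpos
        push_neg at hpos
        have h1 := hfK ((u / f ψ + 1) • ψ) (hKsmul _ (by positivity) ψ hψ)
        rw [map_smul, smul_eq_mul] at h1
        have h2 : (u / f ψ + 1) * f ψ = u + f ψ := by field_simp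
        rw [h2] at h1
        linarith
      obtain ⟨M₁, hM₁⟩ := bidual_exists f
      have hM₁C : ∀ x ∈ C, (-M₁) x ∈ C := by
        intro x hx
        apply hbipolar
        intro x' hx'
        have h1 := hfnonpos _ (hGK x hx x' hx')
        rw [hM₁] at h1
        have h2 : x' (M₁ x) ≤ 0 := h1
        rw [ContinuousLinearMap.neg_apply, map_neg]
        linarith
      have h3 := hφ' (-M₁) hM₁C
      have h4 : f φ ≤ 0 := by
        rw [hM₁ φ]
        have h5 : φ (-M₁) = - (φ M₁) := by rw [map_neg]
        linarith
      linarith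
    obtain ⟨r, hr, q, hqD, hφeq⟩ := hφK
    rw [hDdef, convexHull_eq] at hqD
    obtain ⟨ι, t, w, z, hw0, hw1, hzS, hq⟩ := hqD
    have hrep : ∀ i ∈ t, ∃ p : X × (X →L[ℝ] ℝ),
        ((p.1 ∈ C ∧ p.1 ∈ Metric.sphere (0:X) 1) ∧ p.2 ∈ C'₁) ∧ β p.1 p.2 = z i := by
      intro i hi
      obtain ⟨p, hp, hpz⟩ := hzS i hi
      exact ⟨p, ⟨⟨hp.1.1, hp.1.2⟩, hp.2⟩, hpz⟩
    choose p hp hpz using hrep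
    have htime : ∀ i (hi : i ∈ t), ∃ t₁ : ℝ, 0 ≤ t₁ ∧ ∀ s : ℝ, t₁ ≤ s →
        NormedSpace.exp (s • A) (M ((p i hi).1)) ∈ C := by
      intro i hi
      exact h_ind _ (hM' _ (hp i hi).1.1)
    choose T hT0 hT using htime
    refine ⟨((t.attach.sup fun i => Real.toNNReal (T i.1 i.2) : NNReal) : ℝ),
      NNReal.coe_nonneg _, fun s hs => ?_⟩
    rw [exp_compL, hφeq, ContinuousLinearMap.smul_apply, smul_eq_mul]
    apply mul_nonneg hr
    rw [← hq, Finset.centerMass_eq_of_sum_1 _ _ hw1, ContinuousLinearMap.sum_apply]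
    apply Finset.sum_nonneg
    intro i hi
    rw [ContinuousLinearMap.smul_apply, smul_eq_mul]
    apply mul_nonneg (hw0 i hi)
    rw [← hpz i hi]
    show 0 ≤ (p i hi).2 (((NormedSpace.exp (s • A)).comp M) ((p i hi).1))
    rw [ContinuousLinearMap.comp_apply]
    apply (hp i hi).2.1
    apply hT i hi s
    calc T i hi = ((Real.toNNReal (T i hi) : NNReal) : ℝ) :=
          (Real.coe_toNNReal _ (hT0 i hi)).symm
      _ ≤ ((t.attach.sup fun j => Real.toNNReal (T j.1 j.2) : NNReal) : ℝ) := by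
          have hle : Real.toNNReal (T i hi) ≤ t.attach.sup fun j => Real.toNNReal (T j.1 j.2) :=
            Finset.le_sup (f := fun j : {x // x ∈ t} => Real.toNNReal (T j.1 j.2))
              (Finset.mem_attach t ⟨i, hi⟩)
          exact_mod_cast hle
      _ ≤ s := hs
  · -- not individually eventually nonnegative
    intro hcon
    obtain ⟨t₀, ht₀, hmem⟩ := hcon (ContinuousLinearMap.id ℝ X) (fun x hx => hx)
    refine h_not_unif ⟨t₀, ht₀, fun t ht x hx => ?_⟩
    have h2 := hmem t ht
    rw [Set.mem_setOf_eq] at h2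
    have h3 := h2 x hx
    rwa [exp_compL, ContinuousLinearMap.comp_id] at h3
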